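/- Let 𝔖 = {(A_ξ, F_ξ, 𝔅_ξ)}_{ξ∈W} be a tower of permutations and suppose that every subset of W of cardinality at most ℵ₁ has a strict upper bound in W (i.e. the cofinality of W is greater than ω₁). Then ℚ(𝔖) has property K: for every family {p_η : η < ω₁} of conditions in ℚ(𝔖) there is an uncountable set S ⊆ ω₁ such that p_η and p_ζ are compatible for all η, ζ ∈ S. -/

import Mathlib

/-- A finite subalgebra of the Boolean algebra `𝒫(ℕ)` of subsets of `ℕ`. -/
def IsFiniteSubalgebra (𝔅 : Set (Set ℕ)) : Prop :=
  𝔅.Finite ∧ ∅ ∈ 𝔅 ∧ Set.univ ∈ 𝔅 ∧ (∀ X ∈ 𝔅, Xᶜ ∈ 𝔅) ∧ ∀ X ∈ 𝔅, ∀ Y ∈ 𝔅, X ∪ Y ∈ 𝔅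

/-- A tower of permutations `𝔖 = {(A_ξ, F_ξ, 𝔅_ξ)}_{ξ ∈ W}` indexed by a set `W`
of ordinals. -/
structure Tower (W : Set Ordinal) where
  /-- the sets `A_ξ` -/
  A : Ordinal → Set ℕ
  /-- the permutations `F_ξ` of `ℕ` -/
  F : Ordinal → (ℕ → ℕ)
  /-- the finite subalgebras `𝔅_ξ` -/
  Alg : Ordinal → Set (Set ℕ)
  A_inf : ∀ ξ ∈ W, (A ξ).Infinite
  F_bij : ∀ ξ ∈ W, Function.Bijective (F ξ)
  F_seg : ∀ ξ ∈ W, ∀ m ∈ A ξ, Set.BijOn (F ξ) (Set.Iio m) (Set.Iio m)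
  Alg_fin : ∀ ξ ∈ W, IsFiniteSubalgebra (Alg ξ)
  Alg_mono : ∀ ξ ∈ W, ∀ ζ ∈ W, ξ < ζ → Alg ξ ⊆ Alg ζ
  A_ae_sub : ∀ ξ ∈ W, ∀ ζ ∈ W, ξ < ζ → (A ζ \ A ξ).Finite
  F_ae_eq : ∀ ξ ∈ W, ∀ ζ ∈ W, ξ < ζ → ∀ B ∈ Alg ξ,
    (symmDiff (F ζ '' B) (F ξ '' B)).Finite

/-- A condition `p = (a^p, f^p, α^p, 𝔅^p)` in the forcing `ℚ(𝔖)`.  The finite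
partial function `f^p` (whose domain is `{0, …, max(a^p) − 1}`) is modelled as a
total function on `ℕ` which is the identity from `max(a^p)` onwards. -/
structure QCond {W : Set Ordinal} (S : Tower W) where
  /-- the finite nonempty set `a^p` -/
  a : Finset ℕ
  /-- the finite partial permutation `f^p` -/
  f : ℕ → ℕ
  /-- the ordinal `α^p ∈ W` -/
  α : Ordinal
  /-- the finite subalgebra `𝔅^p` -/
  Alg : Set (Set ℕ)
  a_ne : a.Nonempty
  f_seg : ∀ m ∈ a, Set.BijOn f (Set.Iio m) (Set.Iio m)
  f_pad : ∀ i, a.max' a_ne ≤ i → f i = i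
  α_mem : α ∈ W
  max_mem : a.max' a_ne ∈ S.A α
  Alg_fin : IsFiniteSubalgebra Alg

namespace QCond

variable {W : Set Ordinal} {S : Tower W}

/-- `max (a^p)`. -/
def top (p : QCond S) : ℕ := p.a.max' p.a_ne

/-- The order `p ≤ q` on `ℚ(𝔖)`. -/
def le (p q : QCond S) : Prop :=
  p.a ⊆ q.a ∧
  q.a.filter (fun n => n ≤ p.top) = p.a ∧
  (∀ i, i < p.top → q.f i = p.f i) ∧
  p.Alg ⊆ q.Alg ∧
  p.α ≤ q.α ∧
  ({n : ℕ | n ∈ S.A q.α ∧ q.top ≤ n} ∪ ((↑q.a : Set ℕ) \ ↑p.a)) ⊆ S.A p.α ∧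
  ∀ B ∈ p.Alg ∩ S.Alg p.α,
    (∀ m ∈ q.a, ∀ n ∈ q.a, p.top ≤ m → m < n →
      q.f '' (B ∩ Set.Ico m n) = S.F p.α '' (B ∩ Set.Ico m n)) ∧
    (∀ m ∈ S.A q.α, ∀ n ∈ S.A q.α, q.top ≤ m → m < n →
      S.F q.α '' (B ∩ Set.Ico m n) = S.F p.α '' (B ∩ Set.Ico m n))

/-- A subset `D ⊆ ℚ(𝔖)` is dense. -/
def IsDense (D : Set (QCond S)) : Prop := ∀ p : QCond S, ∃ q ∈ D, le p q

/-- Two conditions are compatible. -/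
def Compatible (p q : QCond S) : Prop := ∃ r : QCond S, le p r ∧ le q r

end QCond


section Helpers


lemma image_inter_Ico {F : ℕ → ℕ} (hinj : Function.Injective F) {m n : ℕ}
    (hm : Set.BijOn F (Set.Iio m) (Set.Iio m)) (hn : Set.BijOn F (Set.Iio n) (Set.Iio n))
    (B : Set ℕ) : F '' (B ∩ Set.Ico m n) = (F '' B) ∩ Set.Ico m n := by
  ext y
  constructor
  · rintro ⟨x, ⟨hxB, hxm, hxn⟩, rfl⟩
    refine ⟨⟨x, hxB, rfl⟩, ?_, hn.mapsTo hxn⟩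
    by_contra h
    push_neg at h
    obtain ⟨z, hz, hze⟩ := hm.surjOn (Set.mem_Iio.2 h)
    have hzx : z = x := hinj hze
    simp only [Set.mem_Iio] at hz
    omega
  · rintro ⟨⟨x, hxB, rfl⟩, hym, hyn⟩
    obtain ⟨z, hz, hze⟩ := hn.surjOn (Set.mem_Iio.2 hyn)
    have hzx : z = x := hinj hze
    simp only [Set.mem_Iio] at hz
    have hxm : m ≤ x := by
      by_contra h
      push_neg at h
      have := hm.mapsTo (Set.mem_Iio.2 h)
      simp only [Set.mem_Iio] at this
      omega
    exact ⟨x, ⟨hxB, hxm, by omega⟩, rfl⟩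

lemma bijOn_Ico {F : ℕ → ℕ} (hinj : Function.Injective F) {m n : ℕ}
    (hm : Set.BijOn F (Set.Iio m) (Set.Iio m)) (hn : Set.BijOn F (Set.Iio n) (Set.Iio n)) :
    Set.BijOn F (Set.Ico m n) (Set.Ico m n) := by
  have h := hinj.injOn.bijOn_image (s := Set.Ico m n)
  have himg : F '' Set.Ico m n = Set.Ico m n := by
    have hd : Set.Ico m n = Set.Iio n \ Set.Iio m := by
      ext x; simp only [Set.mem_Ico, Set.mem_diff, Set.mem_Iio]; omega
    rw [hd, Set.image_diff hinj, hm.image_eq, hn.image_eq]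
  rwa [himg] at h

lemma exists_finiteSubalgebra_union {B1 B2 : Set (Set ℕ)}
    (h1 : IsFiniteSubalgebra B1) (h2 : IsFiniteSubalgebra B2) :
    ∃ B, IsFiniteSubalgebra B ∧ B1 ⊆ B ∧ B2 ⊆ B := by
  classical
  set T : Set (Set ℕ) := B1 ∪ B2 with hT
  have hTfin : T.Finite := h1.1.union h2.1
  set Bc : Set (Set ℕ) :=
    {X | ∀ i j : ℕ, (∀ Y ∈ T, (i ∈ Y ↔ j ∈ Y)) → (i ∈ X ↔ j ∈ X)} with hBc
  have hsub : T ⊆ Bc := fun Y hY i j h => h Y hY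
  refine ⟨Bc, ⟨?_, ?_, ?_, ?_, ?_⟩, fun Y hY => hsub (Or.inl hY), fun Y hY => hsub (Or.inr hY)⟩
  · -- finiteness
    haveI := hTfin.to_subtype
    set φ : ℕ → (↥T → Prop) := fun i Y => i ∈ (Y : Set ℕ) with hφ
    have : Bc ⊆ Set.range (fun s : Set (↥T → Prop) => φ ⁻¹' s) := by
      intro X hX
      refine ⟨φ '' X, ?_⟩
      ext i
      simp only [Set.mem_preimage, Set.mem_image]
      constructor
      · rintro ⟨j, hj, hje⟩
        have : ∀ Y ∈ T, (j ∈ Y ↔ i ∈ Y) := by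
          intro Y hY
          have := congrFun hje ⟨Y, hY⟩
          simp [hφ] at this
          exact this
        exact (hX j i this).1 hj
      · intro hi
        exact ⟨i, hi, rfl⟩
    exact (Set.finite_range _).subset this
  · intro i j _; simp
  · intro i j _; simp
  · intro X hX i j h
    simpa using not_iff_not.2 (hX i j h)
  · intro X hX Y hY i j h
    simp only [Set.mem_union]
    rw [hX i j h, hY i j h]


variable {W : Set Ordinal} {S : Tower W}

lemma exists_ext (p : QCond S) {ζ : Ordinal} (hζW : ζ ∈ W) (hζ : p.α < ζ) :
    ∃ q : QCond S, QCond.le p q ∧ q.α = ζ := by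
  classical
  set t := p.top with ht
  have htmem : t ∈ p.a := p.a.max'_mem p.a_ne
  set K : Set ℕ := (S.A ζ \ S.A p.α) ∪
      ⋃ B ∈ p.Alg ∩ S.Alg p.α, symmDiff (S.F ζ '' B) (S.F p.α '' B) with hK
  have hKfin : K.Finite := by
    refine (S.A_ae_sub p.α p.α_mem ζ hζW hζ).union
      (Set.Finite.biUnion (p.Alg_fin.1.subset Set.inter_subset_left) ?_)
    intro B hB
    exact S.F_ae_eq p.α p.α_mem ζ hζW hζ B hB.2
  obtain ⟨b, hb⟩ := hKfin.bddAbove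
  set N : ℕ := max (b + 1) (t + 1) with hN
  have hKN : ∀ k ∈ K, k < N := fun k hk => by
    have := hb hk; omega
  have htN : t < N := by omega
  obtain ⟨M, hMA, hNM⟩ := (S.A_inf ζ hζW).exists_gt N
  have hMα : M ∈ S.A p.α := by
    by_contra h
    exact absurd (hKN M (Or.inl ⟨hMA, h⟩)) (by omega)
  have htM : t < M := by omega
  set f' : ℕ → ℕ := fun i => if i < t then p.f i else if i < M then S.F p.α i else i with hf'
  have hFinj : Function.Injective (S.F p.α) := (S.F_bij p.α p.α_mem).injective
  have hb1 : Set.BijOn f' (Set.Iio t) (Set.Iio t) :=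
    (p.f_seg t htmem).congr fun i hi => by
      simp only [Set.mem_Iio] at hi; simp [hf', hi]
  have hb2 : Set.BijOn f' (Set.Ico t M) (Set.Ico t M) :=
    (bijOn_Ico hFinj (S.F_seg p.α p.α_mem t p.max_mem) (S.F_seg p.α p.α_mem M hMα)).congr
      fun i hi => by
        simp only [Set.mem_Ico] at hi; simp [hf', hi.2, Nat.not_lt.2 hi.1]
  have hbM : Set.BijOn f' (Set.Iio M) (Set.Iio M) := by
    have hinj : Set.InjOn f' (Set.Iio t ∪ Set.Ico t M) := by
      intro x hx y hy he
      rcases hx with hx | hx <;> rcases hy with hy | hy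
      · exact hb1.injOn hx hy he
      · have h1 := hb1.mapsTo hx
        have h2 := hb2.mapsTo hy
        simp only [Set.mem_Iio, Set.mem_Ico] at h1 h2
        omega
      · have h1 := hb2.mapsTo hx
        have h2 := hb1.mapsTo hy
        simp only [Set.mem_Iio, Set.mem_Ico] at h1 h2
        omega
      · exact hb2.injOn hx hy he
    have := (hb1.union hb2 hinj)
    have hU : Set.Iio t ∪ Set.Ico t M = Set.Iio M := by
      ext x; simp only [Set.mem_union, Set.mem_Iio, Set.mem_Ico]; omega
    rwa [hU] at this
  set a' : Finset ℕ := insert M p.a with ha'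
  have ha'ne : a'.Nonempty := ⟨M, Finset.mem_insert_self _ _⟩
  have hmax : a'.max' ha'ne = M := by
    refine le_antisymm (Finset.max'_le _ _ _ fun x hx => ?_) (Finset.le_max' _ _ (Finset.mem_insert_self _ _))
    rcases Finset.mem_insert.1 hx with rfl | hx
    · exact le_rfl
    · exact le_trans (Finset.le_max' _ _ hx) htM.le
  set q : QCond S := {
    a := a'
    f := f'
    α := ζ
    Alg := p.Alg
    a_ne := ha'ne
    f_seg := by
      intro m hm
      rcases Finset.mem_insert.1 hm with rfl | hm
      · exact hbM
      · have hmt : m ≤ t := Finset.le_max' _ _ hm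
        exact (p.f_seg m hm).congr fun i hi => by
          simp only [Set.mem_Iio] at hi
          simp [hf', show i < t by omega]
    f_pad := by
      intro i hi
      rw [hmax] at hi
      simp [hf', show ¬ i < t by omega, show ¬ i < M by omega]
    α_mem := hζW
    max_mem := by rw [hmax]; exact hMA
    Alg_fin := p.Alg_fin } with hq
  have hqtop : q.top = M := hmax
  refine ⟨q, ⟨Finset.subset_insert _ _, ?_, ?_, subset_rfl, hζ.le, ?_, ?_⟩, rfl⟩
  · -- filter
    show a'.filter (fun n => n ≤ t) = p.a
    ext x
    simp only [ha', Finset.mem_filter, Finset.mem_insert]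
    constructor
    · rintro ⟨rfl | hx, hle⟩
      · omega
      · exact hx
    · intro hx
      exact ⟨Or.inr hx, Finset.le_max' _ _ hx⟩
  · intro i hi
    simp [hq, hf', show i < t from hi]
  · -- the A-subset condition
    rintro n (⟨hnA, hn⟩ | hn)
    · rw [hqtop] at hn
      by_contra h
      have := hKN n (Or.inl ⟨hnA, h⟩)
      omega
    · have hn' : n ∈ (↑(insert M p.a) : Set ℕ) \ ↑p.a := hn
      simp only [Finset.coe_insert, Set.mem_diff, Set.mem_insert_iff, Finset.mem_coe] at hn'
      rcases hn'.1 with rfl | hx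
      · exact hMα
      · exact absurd hx hn'.2
  · intro B hB
    constructor
    · intro m hm n hn htm hmn
      have hnle : n ≤ M := by
        rcases Finset.mem_insert.1 (show n ∈ insert M p.a from hn) with rfl | h
        · exact le_rfl
        · exact le_trans (Finset.le_max' _ _ h) htM.le
      have hm' : m ∈ p.a := by
        rcases Finset.mem_insert.1 (show m ∈ insert M p.a from hm) with rfl | h
        · exact absurd hmn (not_lt.2 hnle)
        · exact h
      have hmt : m = t := le_antisymm (Finset.le_max' _ _ hm') htm
      have hn' : n = M := by
        rcases Finset.mem_insert.1 (show n ∈ insert M p.a from hn) with rfl | h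
        · rfl
        · have hnt : n ≤ t := Finset.le_max' _ _ h
          omega
      subst hmt; subst hn'
      refine Set.image_congr fun x hx => ?_
      simp only [Set.mem_inter_iff, Set.mem_Ico] at hx
      simp [hq, hf', Nat.not_lt.2 hx.2.1, hx.2.2]
    · intro m hmA n hnA hm hmn
      rw [hqtop] at hm
      have hmα : m ∈ S.A p.α := by
        by_contra h
        have := hKN m (Or.inl ⟨hmA, h⟩)
        omega
      have hnα : n ∈ S.A p.α := by
        by_contra h
        have := hKN n (Or.inl ⟨hnA, h⟩)
        omega
      have hζinj : Function.Injective (S.F ζ) := (S.F_bij ζ hζW).injective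
      rw [image_inter_Ico hζinj (S.F_seg ζ hζW m hmA) (S.F_seg ζ hζW n hnA),
        image_inter_Ico hFinj (S.F_seg p.α p.α_mem m hmα) (S.F_seg p.α p.α_mem n hnα)]
      ext y
      simp only [Set.mem_inter_iff, Set.mem_Ico]
      constructor
      · rintro ⟨hy, hy1, hy2⟩
        refine ⟨?_, hy1, hy2⟩
        by_contra h
        have hyK : y ∈ K := Or.inr (Set.mem_biUnion hB (Set.mem_symmDiff.2 (Or.inl ⟨hy, h⟩)))
        have := hKN y hyK
        omega
      · rintro ⟨hy, hy1, hy2⟩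
        refine ⟨?_, hy1, hy2⟩
        by_contra h
        have hyK : y ∈ K := Or.inr (Set.mem_biUnion hB (Set.mem_symmDiff.2 (Or.inr ⟨hy, h⟩)))
        have := hKN y hyK
        omega

lemma top_eq_of_a_eq {q q' : QCond S} (h : q.a = q'.a) : q.top = q'.top :=
  le_antisymm (Finset.max'_le _ _ _ fun x hx => Finset.le_max' _ _ (h ▸ hx))
    (Finset.max'_le _ _ _ fun x hx => Finset.le_max' _ _ (h.symm ▸ hx))

lemma compatible_of_agree {p p' q q' : QCond S} (hpq : QCond.le p q) (hpq' : QCond.le p' q')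
    (ha : q.a = q'.a) (hα : q.α = q'.α) (hf : ∀ i < q.top, q.f i = q'.f i) :
    QCond.Compatible p p' := by
  classical
  obtain ⟨Bc, hBc, hB1, hB2⟩ := exists_finiteSubalgebra_union p.Alg_fin p'.Alg_fin
  have htop : q.top = q'.top := by
    refine le_antisymm (Finset.max'_le _ _ _ fun x hx => Finset.le_max' _ _ (ha ▸ hx))
      (Finset.max'_le _ _ _ fun x hx => Finset.le_max' _ _ (ha.symm ▸ hx))
  set r : QCond S := {
    a := q.a
    f := q.f
    α := q.α
    Alg := Bc
    a_ne := q.a_ne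
    f_seg := q.f_seg
    f_pad := q.f_pad
    α_mem := q.α_mem
    max_mem := q.max_mem
    Alg_fin := hBc } with hr
  have hrq : r.top = q.top := rfl
  refine ⟨r, ⟨hpq.1, hpq.2.1, hpq.2.2.1, fun X hX => hB1 hX, hpq.2.2.2.2.1,
      hpq.2.2.2.2.2.1, hpq.2.2.2.2.2.2⟩, ?_⟩
  have hp't : p'.top ≤ q.top := by
    rw [htop]
    exact Finset.le_max' _ _ (hpq'.1 (p'.a.max'_mem p'.a_ne))
  refine ⟨?_, ?_, ?_, fun X hX => hB2 hX, ?_, ?_, ?_⟩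
  · show p'.a ⊆ q.a
    rw [ha]; exact hpq'.1
  · show q.a.filter _ = p'.a
    rw [ha]; exact hpq'.2.1
  · intro i hi
    show q.f i = p'.f i
    rw [hf i (by omega), hpq'.2.2.1 i hi]
  · show p'.α ≤ q.α
    rw [hα]; exact hpq'.2.2.2.2.1
  · show _ ⊆ S.A p'.α
    have : ({n : ℕ | n ∈ S.A r.α ∧ r.top ≤ n} ∪ ((↑r.a : Set ℕ) \ ↑p'.a)) =
        ({n : ℕ | n ∈ S.A q'.α ∧ q'.top ≤ n} ∪ ((↑q'.a : Set ℕ) \ ↑p'.a)) := by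
      show ({n : ℕ | n ∈ S.A q.α ∧ q.top ≤ n} ∪ ((↑q.a : Set ℕ) \ ↑p'.a)) = _
      rw [ha, hα, htop]
    rw [this]
    exact hpq'.2.2.2.2.2.1
  · intro B hB
    obtain ⟨h1, h2⟩ := hpq'.2.2.2.2.2.2 B hB
    constructor
    · intro m hm n hn htm hmn
      have hm' : m ∈ q'.a := by rwa [← ha]
      have hn' : n ∈ q'.a := by rwa [← ha]
      have heq : q.f '' (B ∩ Set.Ico m n) = q'.f '' (B ∩ Set.Ico m n) := by
        refine Set.image_congr fun x hx => ?_
        simp only [Set.mem_inter_iff, Set.mem_Ico] at hx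
        have hnq : n ≤ q.top := Finset.le_max' _ _ hn
        exact hf x (by omega)
      show q.f '' _ = _
      rw [heq]
      exact h1 m hm' n hn' htm hmn
    · intro m hmA n hnA hm hmn
      have hmA' : m ∈ S.A q'.α := by rwa [← hα]
      have hnA' : n ∈ S.A q'.α := by rwa [← hα]
      show S.F q.α '' _ = _
      rw [hα]
      exact h2 m hmA' n hnA' (by rw [← htop]; exact hm) hmn

end Helpers

/-- If every subset of `W` of cardinality at most `ℵ₁` has a strict upper bound
in `W`, then `ℚ(𝔖)` has property K: every `ω₁`-indexed family of conditions has
an uncountable pairwise compatible subfamily. -/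
theorem propertyK_of_large_cofinality (W : Set Ordinal) (S : Tower W)
    (hcof : ∀ X : Set Ordinal, X ⊆ W → Cardinal.mk ↥X ≤ Cardinal.aleph 1 →
      ∃ ζ ∈ W, ∀ ξ ∈ X, ξ < ζ)
    (p : {η : Ordinal // η < (Cardinal.aleph 1).ord} → QCond S) :
    ∃ T : Set {η : Ordinal // η < (Cardinal.aleph 1).ord}, ¬ T.Countable ∧
      ∀ η ∈ T, ∀ ζ ∈ T, QCond.Compatible (p η) (p ζ) := by
  classical
  set X : Set Ordinal := Set.range fun η => (p η).α with hX
  have hXW : X ⊆ W := by rintro _ ⟨η, rfl⟩; exact (p η).α_mem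
  have hdom : Cardinal.mk {η : Ordinal // η < (Cardinal.aleph 1).ord} = Cardinal.aleph 1 := by
    have h := Ordinal.mk_Iio_ordinal (Cardinal.aleph 1).ord
    rw [Cardinal.card_ord, Cardinal.lift_aleph, Ordinal.lift_one] at h
    exact h
  have hXle : Cardinal.mk ↥X ≤ Cardinal.aleph 1 := by
    refine Cardinal.lift_le.1 ?_
    rw [Cardinal.lift_aleph, Ordinal.lift_one]
    refine le_trans Cardinal.mk_range_le_lift ?_
    rw [hdom, Cardinal.lift_aleph, Ordinal.lift_one]
  obtain ⟨ζ, hζW, hζub⟩ := hcof X hXW hXle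
  have hα : ∀ η, (p η).α < ζ := fun η => hζub _ ⟨η, rfl⟩
  choose Q hQle hQα using fun η => exists_ext (p η) hζW (hα η)
  set encode : {η : Ordinal // η < (Cardinal.aleph 1).ord} → Finset ℕ × List ℕ :=
    fun η => ((Q η).a, (List.range (Q η).top).map (Q η).f) with hencode
  have hex : ∃ c, ¬ (encode ⁻¹' {c}).Countable := by
    by_contra h
    push_neg at h
    have huniv : (Set.univ : Set {η : Ordinal // η < (Cardinal.aleph 1).ord}).Countable := by
      have he : (Set.univ : Set {η : Ordinal // η < (Cardinal.aleph 1).ord}) =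
          ⋃ c, encode ⁻¹' {c} := by
        ext η; simp
      rw [he]
      exact Set.countable_iUnion h
    haveI := Set.countable_univ_iff.1 huniv
    have h5 : Cardinal.mk {η : Ordinal // η < (Cardinal.aleph 1).ord} ≤ Cardinal.aleph0 :=
      Cardinal.mk_le_aleph0
    rw [hdom] at h5
    exact Cardinal.aleph0_lt_aleph_one.2 h5
  obtain ⟨c, hc⟩ := hex
  refine ⟨encode ⁻¹' {c}, hc, ?_⟩
  intro η hη θ hθ
  have he : encode η = encode θ := by
    have h1 : encode η = c := hη
    have h2 : encode θ = c := hθ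
    rw [h1, h2]
  have ha : (Q η).a = (Q θ).a := congrArg Prod.fst he
  have htop : (Q η).top = (Q θ).top := top_eq_of_a_eq ha
  have hαeq : (Q η).α = (Q θ).α := by rw [hQα η, hQα θ]
  refine compatible_of_agree (hQle η) (hQle θ) ha hαeq ?_
  intro i hi
  have hl : (List.range (Q η).top).map (Q η).f = (List.range (Q θ).top).map (Q θ).f :=
    congrArg Prod.snd he
  have h1 : ((List.range (Q η).top).map (Q η).f)[i]? = some ((Q η).f i) := by
    rw [List.getElem?_map, List.getElem?_range hi]
    rfl
  have h2 : ((List.range (Q θ).top).map (Q θ).f)[i]? = some ((Q θ).f i) := by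
    rw [List.getElem?_map, List.getElem?_range (htop ▸ hi)]
    rfl
  rw [hl, h2] at h1
  exact Option.some.inj h1.symm
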